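/- Let R > 0 and let w : (0,R) → ℝ be continuously differentiable with ∫₀^R (w(r)²/r) dr < ∞ and ∫₀^R w'(r)² r dr < ∞. Then for all 0 < r₁ < r₂ < R one has |w(r₂)² − w(r₁)²| ≤ 2 ( ∫_{r₁}^{r₂} (w²/r) dr )^{1/2} ( ∫_{r₁}^{r₂} w'² r dr )^{1/2}, and consequently w extends continuously to [0,R) with lim_{r→0⁺} w(r) = 0. -/

import Mathlib

open Real MeasureTheory

lemma radial_CS_bound
    (R : ℝ) (hR : 0 < R) (w : ℝ → ℝ)
    (hw : ContDiffOn ℝ 1 w (Set.Ioo 0 R))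
    (h1 : IntegrableOn (fun r => (w r)^2 / r) (Set.Ioo 0 R))
    (h2 : IntegrableOn (fun r => (deriv w r)^2 * r) (Set.Ioo 0 R))
    (r1 r2 : ℝ) (h01 : 0 < r1) (h12 : r1 < r2) (h2R : r2 < R) :
    |(w r2)^2 - (w r1)^2| ≤
      2 * Real.sqrt (∫ r in Set.Ioo r1 r2, (w r)^2 / r) *
        Real.sqrt (∫ r in Set.Ioo r1 r2, (deriv w r)^2 * r) := by
  have hsub : Set.Icc r1 r2 ⊆ Set.Ioo 0 R :=
    fun x hx => ⟨lt_of_lt_of_le h01 hx.1, lt_of_le_of_lt hx.2 h2R⟩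
  have hsub' : Set.Ioo r1 r2 ⊆ Set.Ioo 0 R := Set.Ioo_subset_Icc_self.trans hsub
  have hwc : ContinuousOn w (Set.Ioo 0 R) := hw.continuousOn
  have hdc : ContinuousOn (deriv w) (Set.Ioo 0 R) :=
    hw.continuousOn_deriv_of_isOpen isOpen_Ioo le_rfl
  have hdiff : ∀ x ∈ Set.Icc r1 r2,
      HasDerivAt (fun y => (w y)^2) (2 * w x * deriv w x) x := by
    intro x hx
    have hx' : Set.Ioo 0 R ∈ nhds x := isOpen_Ioo.mem_nhds (hsub hx)
    have hd : DifferentiableAt ℝ w x :=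
      ((hw.differentiableOn one_ne_zero) x (hsub hx)).differentiableAt hx'
    simpa using hd.hasDerivAt.fun_pow 2
  have hint : IntervalIntegrable (fun x => 2 * w x * deriv w x) volume r1 r2 := by
    apply ContinuousOn.intervalIntegrable
    rw [Set.uIcc_of_le h12.le]
    exact (continuousOn_const.mul (hwc.mono hsub)).mul (hdc.mono hsub)
  have key : ∫ x in r1..r2, 2 * w x * deriv w x = (w r2)^2 - (w r1)^2 := by
    apply intervalIntegral.integral_eq_sub_of_hasDerivAt
    · intro x hx
      exact hdiff x (by rwa [Set.uIcc_of_le h12.le] at hx)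
    · exact hint
  have hIoo : ∫ x in r1..r2, 2 * w x * deriv w x
      = ∫ x in Set.Ioo r1 r2, 2 * w x * deriv w x := by
    rw [intervalIntegral.integral_of_le h12.le, integral_Ioc_eq_integral_Ioo]
  set f : ℝ → ℝ := fun x => |w x| / Real.sqrt x with hf
  set g : ℝ → ℝ := fun x => |deriv w x| * Real.sqrt x with hg
  have hfsq : ∀ x ∈ Set.Ioo r1 r2, (w x)^2 / x = f x ^ 2 := by
    intro x hx
    have hx0 : 0 < x := lt_trans h01 hx.1
    rw [hf]
    rw [div_pow, sq_abs, Real.sq_sqrt hx0.le]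
  have hgsq : ∀ x ∈ Set.Ioo r1 r2, (deriv w x)^2 * x = g x ^ 2 := by
    intro x hx
    have hx0 : 0 < x := lt_trans h01 hx.1
    rw [hg]
    rw [mul_pow, sq_abs, Real.sq_sqrt hx0.le]
  have hfg : ∀ x ∈ Set.Ioo r1 r2, |2 * w x * deriv w x| = 2 * (f x * g x) := by
    intro x hx
    have hx0 : 0 < x := lt_trans h01 hx.1
    have hs : Real.sqrt x ≠ 0 := (Real.sqrt_pos.2 hx0).ne'
    rw [hf, hg, abs_mul, abs_mul, abs_two]
    field_simp
  have hfnn : 0 ≤ᵐ[volume.restrict (Set.Ioo r1 r2)] f :=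
    Filter.Eventually.of_forall fun x => div_nonneg (abs_nonneg _) (Real.sqrt_nonneg _)
  have hgnn : 0 ≤ᵐ[volume.restrict (Set.Ioo r1 r2)] g :=
    Filter.Eventually.of_forall fun x => mul_nonneg (abs_nonneg _) (Real.sqrt_nonneg _)
  have hfcont : ContinuousOn f (Set.Ioo r1 r2) := by
    apply ((hwc.mono hsub').abs).div Real.continuous_sqrt.continuousOn
    intro x hx
    exact (Real.sqrt_pos.2 (lt_trans h01 hx.1)).ne'
  have hgcont : ContinuousOn g (Set.Ioo r1 r2) :=
    ((hdc.mono hsub').abs).mul Real.continuous_sqrt.continuousOn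
  have hf2 : IntegrableOn (fun x => f x ^ 2) (Set.Ioo r1 r2) :=
    (h1.mono_set hsub').congr ((ae_restrict_iff' measurableSet_Ioo).2
      (Filter.Eventually.of_forall fun x hx => hfsq x hx))
  have hg2 : IntegrableOn (fun x => g x ^ 2) (Set.Ioo r1 r2) :=
    (h2.mono_set hsub').congr ((ae_restrict_iff' measurableSet_Ioo).2
      (Filter.Eventually.of_forall fun x hx => hgsq x hx))
  have hfmem : MemLp f (ENNReal.ofReal 2) (volume.restrict (Set.Ioo r1 r2)) := by
    rw [show ENNReal.ofReal 2 = 2 by norm_num]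
    exact (memLp_two_iff_integrable_sq
      (hfcont.aestronglyMeasurable measurableSet_Ioo)).2 hf2
  have hgmem : MemLp g (ENNReal.ofReal 2) (volume.restrict (Set.Ioo r1 r2)) := by
    rw [show ENNReal.ofReal 2 = 2 by norm_num]
    exact (memLp_two_iff_integrable_sq
      (hgcont.aestronglyMeasurable measurableSet_Ioo)).2 hg2
  have hconj : Real.HolderConjugate 2 2 := Real.HolderConjugate.two_two
  have hCS := integral_mul_le_Lp_mul_Lq_of_nonneg hconj hfnn hgnn hfmem hgmem
  have hrpow : ∀ y : ℝ, y ^ (2:ℝ) = y ^ 2 := by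
    intro y
    rw [show (2:ℝ) = ((2:ℕ):ℝ) by norm_num, Real.rpow_natCast]
  simp_rw [hrpow] at hCS
  have hA : ∫ x in Set.Ioo r1 r2, f x ^ 2 = ∫ r in Set.Ioo r1 r2, (w r)^2 / r :=
    (setIntegral_congr_fun measurableSet_Ioo fun x hx => hfsq x hx).symm
  have hB : ∫ x in Set.Ioo r1 r2, g x ^ 2 = ∫ r in Set.Ioo r1 r2, (deriv w r)^2 * r :=
    (setIntegral_congr_fun measurableSet_Ioo fun x hx => hgsq x hx).symm
  have hAnn : 0 ≤ ∫ x in Set.Ioo r1 r2, f x ^ 2 :=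
    setIntegral_nonneg measurableSet_Ioo fun x _ => sq_nonneg _
  have hBnn : 0 ≤ ∫ x in Set.Ioo r1 r2, g x ^ 2 :=
    setIntegral_nonneg measurableSet_Ioo fun x _ => sq_nonneg _
  calc |(w r2)^2 - (w r1)^2|
      = |∫ x in Set.Ioo r1 r2, 2 * w x * deriv w x| := by rw [← key, hIoo]
    _ ≤ ∫ x in Set.Ioo r1 r2, |2 * w x * deriv w x| := by
        simpa only [Real.norm_eq_abs] using
          norm_integral_le_integral_norm (μ := volume.restrict (Set.Ioo r1 r2))
            (fun x => 2 * w x * deriv w x)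
    _ = ∫ x in Set.Ioo r1 r2, 2 * (f x * g x) :=
        setIntegral_congr_fun measurableSet_Ioo fun x hx => hfg x hx
    _ = 2 * ∫ x in Set.Ioo r1 r2, f x * g x := integral_const_mul 2 _
    _ ≤ 2 * ((∫ x in Set.Ioo r1 r2, f x ^ 2) ^ (1/2:ℝ) *
          (∫ x in Set.Ioo r1 r2, g x ^ 2) ^ (1/2:ℝ)) := by
        apply mul_le_mul_of_nonneg_left hCS (by norm_num)
    _ = 2 * Real.sqrt (∫ r in Set.Ioo r1 r2, (w r)^2 / r) *
          Real.sqrt (∫ r in Set.Ioo r1 r2, (deriv w r)^2 * r) := by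
        rw [hA, hB, ← Real.sqrt_eq_rpow, ← Real.sqrt_eq_rpow]
        ring

/-- A C¹ radial component with `∫ w²/r dr < ∞` and `∫ w'² r dr < ∞`
satisfies the Cauchy–Schwarz bound `|w(r₂)² − w(r₁)²| ≤ 2(∫ w²/r)^{1/2}(∫ w'² r)^{1/2}`
and tends to `0` at the origin. -/
theorem radial_component_vanishes_at_origin
    (R : ℝ) (hR : 0 < R) (w : ℝ → ℝ)
    (hw : ContDiffOn ℝ 1 w (Set.Ioo 0 R))
    (h1 : IntegrableOn (fun r => (w r)^2 / r) (Set.Ioo 0 R))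
    (h2 : IntegrableOn (fun r => (deriv w r)^2 * r) (Set.Ioo 0 R)) :
    (∀ r1 r2 : ℝ, 0 < r1 → r1 < r2 → r2 < R →
      |(w r2)^2 - (w r1)^2| ≤
        2 * Real.sqrt (∫ r in Set.Ioo r1 r2, (w r)^2 / r) *
          Real.sqrt (∫ r in Set.Ioo r1 r2, (deriv w r)^2 * r)) ∧
    Filter.Tendsto w (nhdsWithin 0 (Set.Ioi 0)) (nhds 0) := by
  have main := radial_CS_bound R hR w hw h1 h2
  refine ⟨main, ?_⟩
  set F : ℝ → ℝ := fun r => (w r)^2 / r with hF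
  set G : ℝ → ℝ := fun r => (deriv w r)^2 * r with hG
  set b : ℝ := R/2 with hbdef
  have hb : 0 < b := by positivity
  have hbR : b < R := by
    rw [hbdef]; linarith
  have hIb : Set.Ioo 0 b ⊆ Set.Ioo 0 R := Set.Ioo_subset_Ioo le_rfl hbR.le
  have hF_Icc : IntegrableOn F (Set.Icc 0 b) := by
    rw [integrableOn_Icc_iff_integrableOn_Ioo]
    exact h1.mono_set hIb
  have hG_Icc : IntegrableOn G (Set.Icc 0 b) := by
    rw [integrableOn_Icc_iff_integrableOn_Ioo]
    exact h2.mono_set hIb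
  have hSF : Filter.Tendsto (fun x => ∫ t in Set.Ioc 0 x, F t)
      (nhdsWithin 0 (Set.Icc 0 b)) (nhds 0) := by
    have := (intervalIntegral.continuousOn_primitive hF_Icc) 0 ⟨le_rfl, hb.le⟩
    simpa [ContinuousWithinAt, Set.Ioc_self] using this
  have hSG : Filter.Tendsto (fun x => ∫ t in Set.Ioc 0 x, G t)
      (nhdsWithin 0 (Set.Icc 0 b)) (nhds 0) := by
    have := (intervalIntegral.continuousOn_primitive hG_Icc) 0 ⟨le_rfl, hb.le⟩
    simpa [ContinuousWithinAt, Set.Ioc_self] using this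
  -- there exist points with small w² arbitrarily close to 0
  have exists_small : ∀ ε : ℝ, 0 < ε → ∀ d : ℝ, 0 < d → d < R →
      ∃ r ∈ Set.Ioo (0:ℝ) d, (w r)^2 < ε := by
    intro ε hε d hd hdR
    by_contra hcon
    push_neg at hcon
    have hioo : Set.Ioo 0 d ⊆ Set.Ioo 0 R := Set.Ioo_subset_Ioo le_rfl hdR.le
    have hInt : IntegrableOn F (Set.Ioo 0 d) := h1.mono_set hioo
    have hInt2 : IntegrableOn (fun x : ℝ => x⁻¹) (Set.Ioo 0 d) := by
      apply Integrable.mono' (hInt.const_mul ε⁻¹) measurable_inv.aestronglyMeasurable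
      refine (ae_restrict_iff' measurableSet_Ioo).2 (Filter.Eventually.of_forall ?_)
      intro x hx
      rw [Real.norm_eq_abs, abs_of_nonneg (inv_nonneg.2 hx.1.le)]
      have hwx := hcon x hx
      have hx0 : 0 < x := hx.1
      show x⁻¹ ≤ ε⁻¹ * ((w x)^2 / x)
      rw [div_eq_mul_inv]
      calc x⁻¹ = ε⁻¹ * (ε * x⁻¹) := by field_simp
        _ ≤ ε⁻¹ * ((w x)^2 * x⁻¹) := by gcongr
    have hII : IntervalIntegrable (fun x : ℝ => x⁻¹) volume 0 d :=
      (intervalIntegrable_iff_integrableOn_Ioo_of_le hd.le).2 hInt2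
    rw [intervalIntegrable_inv_iff] at hII
    rcases hII with h | h
    · exact hd.ne' h.symm
    · exact h (by rw [Set.uIcc_of_le hd.le]; exact ⟨le_rfl, hd.le⟩)
  have hsq : Filter.Tendsto (fun r => (w r)^2) (nhdsWithin 0 (Set.Ioi 0)) (nhds 0) := by
    rw [Metric.tendsto_nhdsWithin_nhds]
    intro ε hε
    have hev : ∀ᶠ x in nhdsWithin 0 (Set.Icc 0 b),
        (∫ t in Set.Ioc 0 x, F t) < ε/4 ∧ (∫ t in Set.Ioc 0 x, G t) < ε/4 :=
      (hSF.eventually (gt_mem_nhds (by positivity))).and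
        (hSG.eventually (gt_mem_nhds (by positivity)))
    rw [eventually_nhdsWithin_iff] at hev
    rcases Metric.eventually_nhds_iff.1 hev with ⟨δ1, hδ1, H⟩
    set d : ℝ := min (δ1/2) (b/2) with hddef
    have hd0 : 0 < d := lt_min (by positivity) (by positivity)
    have hdb : d ≤ b/2 := min_le_right _ _
    have hdδ : d < δ1 := lt_of_le_of_lt (min_le_left _ _) (by linarith)
    have hdR : d < R := by
      have : b/2 < R := by rw [hbdef]; linarith
      linarith [hdb]
    have hdIcc : d ∈ Set.Icc 0 b := ⟨hd0.le, by linarith⟩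
    have hddist : dist d 0 < δ1 := by
      rw [Real.dist_eq, sub_zero, abs_of_pos hd0]; exact hdδ
    have hSmall := H hddist hdIcc
    obtain ⟨r0, hr0, hr0small⟩ := exists_small (ε/2) (by positivity) d hd0 hdR
    refine ⟨r0, hr0.1, ?_⟩
    intro x hx hxd
    rw [Real.dist_eq, sub_zero, abs_of_pos (Set.mem_Ioi.1 hx)] at hxd
    have hx0 : 0 < x := Set.mem_Ioi.1 hx
    have hxr0 : x < r0 := hxd
    -- bound the integrals over Ioo x r0 by those over Ioc 0 d
    have hsub1 : Set.Ioo x r0 ⊆ Set.Ioc 0 d :=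
      fun y hy => ⟨lt_trans hx0 hy.1, le_trans hy.2.le hr0.2.le⟩
    have hsub2 : Set.Ioc 0 d ⊆ Set.Ioo 0 R :=
      fun y hy => ⟨hy.1, lt_of_le_of_lt hy.2 hdR⟩
    have hFI : IntegrableOn F (Set.Ioc 0 d) := h1.mono_set hsub2
    have hGI : IntegrableOn G (Set.Ioc 0 d) := h2.mono_set hsub2
    have hFnn : 0 ≤ᵐ[volume.restrict (Set.Ioc 0 d)] F :=
      (ae_restrict_iff' measurableSet_Ioc).2 (Filter.Eventually.of_forall fun y hy =>
        div_nonneg (sq_nonneg _) hy.1.le)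
    have hGnn : 0 ≤ᵐ[volume.restrict (Set.Ioc 0 d)] G :=
      (ae_restrict_iff' measurableSet_Ioc).2 (Filter.Eventually.of_forall fun y hy =>
        mul_nonneg (sq_nonneg _) hy.1.le)
    have hFle : (∫ t in Set.Ioo x r0, F t) ≤ ∫ t in Set.Ioc 0 d, F t :=
      setIntegral_mono_set hFI hFnn (HasSubset.Subset.eventuallyLE hsub1)
    have hGle : (∫ t in Set.Ioo x r0, G t) ≤ ∫ t in Set.Ioc 0 d, G t :=
      setIntegral_mono_set hGI hGnn (HasSubset.Subset.eventuallyLE hsub1)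
    have hbound := main x r0 hx0 hxr0 (lt_trans hr0.2 hdR)
    have hFe4 : (∫ t in Set.Ioo x r0, F t) ≤ ε/4 := le_of_lt (lt_of_le_of_lt hFle hSmall.1)
    have hGe4 : (∫ t in Set.Ioo x r0, G t) ≤ ε/4 := le_of_lt (lt_of_le_of_lt hGle hSmall.2)
    have hkey : |(w r0)^2 - (w x)^2| ≤ ε/2 := by
      calc |(w r0)^2 - (w x)^2|
          ≤ 2 * Real.sqrt (∫ t in Set.Ioo x r0, F t) *
              Real.sqrt (∫ t in Set.Ioo x r0, G t) := hbound
        _ ≤ 2 * Real.sqrt (ε/4) * Real.sqrt (ε/4) := by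
            gcongr
        _ = 2 * (ε/4) := by
            rw [mul_assoc, Real.mul_self_sqrt (by positivity)]
        _ = ε/2 := by ring
    have : (w x)^2 ≤ (w r0)^2 + |(w r0)^2 - (w x)^2| := by
      have := abs_sub_abs_le_abs_sub ((w r0)^2) ((w x)^2)
      have h1' := neg_abs_le ((w r0)^2 - (w x)^2)
      nlinarith [abs_nonneg ((w r0)^2 - (w x)^2)]
    rw [Real.dist_eq, sub_zero, abs_of_nonneg (sq_nonneg _)]
    calc (w x)^2 ≤ (w r0)^2 + |(w r0)^2 - (w x)^2| := this
      _ < ε/2 + ε/2 := add_lt_add_of_lt_of_le hr0small hkey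
      _ = ε := by ring
  rw [tendsto_zero_iff_abs_tendsto_zero]
  have hs : Filter.Tendsto (fun r => Real.sqrt ((w r)^2)) (nhdsWithin 0 (Set.Ioi 0)) (nhds 0) := by
    simpa using hsq.sqrt
  exact hs.congr fun r => Real.sqrt_sq_eq_abs _
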